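/- arXiv:1601.04098 — 5 statements merged into one kernel-verified Lean document; each statement's English description precedes it below -/
import Mathlib

section
/- Soundness of the Transitivity axiom: if B ⊆ A* and C ⊆ B*, then C ⊆ A*. -/
open Classical Finset

/-- Peer pressure of set `A` on agent `b`: `‖A‖_b = Σ_{a∈A} w(a,b)`. -/
noncomputable def pressure {𝒜 : Type*} [Fintype 𝒜] (w : 𝒜 → 𝒜 → ℝ)
    (A : Finset 𝒜) (b : 𝒜) : ℝ :=
  ∑ a ∈ A, w a b

/-- Diffusion iterates: `A^0 = A`, `A^{k+1} = A^k ∪ {x : ‖A^k‖_x ≥ θ(x)}`. -/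
noncomputable def iterAdopt {𝒜 : Type*} [Fintype 𝒜] (w : 𝒜 → 𝒜 → ℝ) (θ : 𝒜 → ℝ)
    (A : Finset 𝒜) : ℕ → Finset 𝒜
  | 0 => A
  | k + 1 => iterAdopt w θ A k ∪
      Finset.univ.filter (fun x => θ x ≤ pressure w (iterAdopt w θ A k) x)

/-- Star closure: `A* = ⋃_{k≥0} A^k`. -/
noncomputable def starAdopt {𝒜 : Type*} [Fintype 𝒜] (w : 𝒜 → 𝒜 → ℝ) (θ : 𝒜 → ℝ)
    (A : Finset 𝒜) : Finset 𝒜 :=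
  Finset.univ.filter (fun x => ∃ k : ℕ, x ∈ iterAdopt w θ A k)

lemma iter_mono {𝒜 : Type*} [Fintype 𝒜] (w : 𝒜 → 𝒜 → ℝ) (θ : 𝒜 → ℝ)
    (hw : ∀ a b, 0 ≤ w a b) {A B : Finset 𝒜} (h : A ⊆ B) (k : ℕ) :
    iterAdopt w θ A k ⊆ iterAdopt w θ B k := by
  induction k with
  | zero => exact h
  | succ k ih =>
    intro x hx
    simp only [iterAdopt, Finset.mem_union, Finset.mem_filter, Finset.mem_univ, true_and] at hx ⊢
    rcases hx with hx | hx
    · exact Or.inl (ih hx)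
    · refine Or.inr (hx.trans ?_)
      exact Finset.sum_le_sum_of_subset_of_nonneg ih (fun a _ _ => hw a x)

lemma iter_le {𝒜 : Type*} [Fintype 𝒜] (w : 𝒜 → 𝒜 → ℝ) (θ : 𝒜 → ℝ)
    (A : Finset 𝒜) {j k : ℕ} (h : j ≤ k) :
    iterAdopt w θ A j ⊆ iterAdopt w θ A k := by
  induction k with
  | zero => simp_all
  | succ k ih =>
    rcases h.lt_or_eq with h' | h'
    · exact (ih (Nat.lt_succ_iff.mp h')).trans
        (by intro x hx; simp [iterAdopt, hx])
    · subst h'; rfl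

lemma iter_add {𝒜 : Type*} [Fintype 𝒜] (w : 𝒜 → 𝒜 → ℝ) (θ : 𝒜 → ℝ)
    (A : Finset 𝒜) (N k : ℕ) :
    iterAdopt w θ (iterAdopt w θ A N) k = iterAdopt w θ A (N + k) := by
  induction k with
  | zero => rfl
  | succ k ih => simp [iterAdopt, ih, ← Nat.add_assoc]

lemma star_subset_iter {𝒜 : Type*} [Fintype 𝒜] (w : 𝒜 → 𝒜 → ℝ) (θ : 𝒜 → ℝ)
    (A : Finset 𝒜) : ∃ N, starAdopt w θ A ⊆ iterAdopt w θ A N := by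
  have : ∀ x ∈ starAdopt w θ A, ∃ k, x ∈ iterAdopt w θ A k := by
    intro x hx; simpa [starAdopt] using hx
  choose f hf using this
  classical
  refine ⟨(starAdopt w θ A).attach.sup (fun x => f x.1 x.2), ?_⟩
  intro x hx
  exact iter_le w θ A (Finset.le_sup (Finset.mem_attach _ ⟨x, hx⟩)) (hf x hx)

theorem stmt7 {𝒜 : Type*} [Fintype 𝒜] (w : 𝒜 → 𝒜 → ℝ) (θ : 𝒜 → ℝ)
    (hw : ∀ a b, 0 ≤ w a b) (hθ : ∀ a, 0 ≤ θ a) (A B C : Finset 𝒜)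
    (hAB : B ⊆ starAdopt w θ A) (hBC : C ⊆ starAdopt w θ B) :
    C ⊆ starAdopt w θ A := by
  obtain ⟨N, hN⟩ := star_subset_iter w θ A
  intro x hx
  have := hBC hx
  simp only [starAdopt, Finset.mem_filter, Finset.mem_univ, true_and] at this ⊢
  obtain ⟨k, hk⟩ := this
  refine ⟨N + k, ?_⟩
  have h1 : iterAdopt w θ B k ⊆ iterAdopt w θ (iterAdopt w θ A N) k :=
    iter_mono w θ hw (hAB.trans hN) k
  rw [iter_add] at h1
  exact h1 hk
end

section
/- Soundness of the Augmentation axiom: if B ⊆ A*, then B ∪ C ⊆ (A ∪ C)* for every C ⊆ 𝒜. -/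
open Classical Finset

lemma iterAdopt_mono {𝒜 : Type*} [Fintype 𝒜] (w : 𝒜 → 𝒜 → ℝ) (θ : 𝒜 → ℝ)
    (hw : ∀ a b, 0 ≤ w a b) {A A' : Finset 𝒜} (h : A ⊆ A') (k : ℕ) :
    iterAdopt w θ A k ⊆ iterAdopt w θ A' k := by
  induction k with
  | zero => exact h
  | succ k ih =>
    intro x hx
    simp only [iterAdopt, Finset.mem_union, Finset.mem_filter, Finset.mem_univ, true_and] at hx ⊢
    rcases hx with hx | hx
    · exact Or.inl (ih hx)
    · refine Or.inr (hx.trans ?_)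
      exact Finset.sum_le_sum_of_subset_of_nonneg ih (fun a _ _ => hw a x)

theorem stmt8 {𝒜 : Type*} [Fintype 𝒜] (w : 𝒜 → 𝒜 → ℝ) (θ : 𝒜 → ℝ)
    (hw : ∀ a b, 0 ≤ w a b) (hθ : ∀ a, 0 ≤ θ a) (A B C : Finset 𝒜)
    (hAB : B ⊆ starAdopt w θ A) :
    B ∪ C ⊆ starAdopt w θ (A ∪ C) := by
  intro x hx
  rcases Finset.mem_union.mp hx with hx | hx
  · have := hAB hx
    simp only [starAdopt, Finset.mem_filter, Finset.mem_univ, true_and] at this ⊢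
    obtain ⟨k, hk⟩ := this
    exact ⟨k, iterAdopt_mono w θ hw Finset.subset_union_left k hk⟩
  · simp only [starAdopt, Finset.mem_filter, Finset.mem_univ, true_and]
    exact ⟨0, Finset.mem_union_right _ hx⟩
end

section
/- Soundness of the Lighthouse axiom: let A ⊔ B be a partition of 𝒜 and let {C_a}_{a∈A} be a family of subsets of 𝒜 with ‖B‖_a ≤ ‖C_a‖_a for each a ∈ A. If a₀ ∈ B* for some a₀ ∈ A, then there exists ℓ ∈ A with ℓ ∈ (C_ℓ)*. -/
open Classical Finset

theorem stmt9 {𝒜 : Type*} [Fintype 𝒜] (w : 𝒜 → 𝒜 → ℝ) (θ : 𝒜 → ℝ)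
    (hw : ∀ a b, 0 ≤ w a b) (hθ : ∀ a, 0 ≤ θ a) (A B : Finset 𝒜)
    (hcover : A ∪ B = Finset.univ) (hdisj : A ∩ B = ∅)
    (C : 𝒜 → Finset 𝒜)
    (hC : ∀ a ∈ A, pressure w B a ≤ pressure w (C a) a)
    (a₀ : 𝒜) (ha₀ : a₀ ∈ A) (hstar : a₀ ∈ starAdopt w θ B) :
    ∃ ℓ ∈ A, ℓ ∈ starAdopt w θ (C ℓ) := by
  classical
  rw [starAdopt, Finset.mem_filter] at hstar
  obtain ⟨-, k, hk⟩ := hstar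
  have hP : ∃ n : ℕ, ∃ x ∈ A, x ∈ iterAdopt w θ B n := ⟨k, a₀, ha₀, hk⟩
  set n₀ := Nat.find hP with hn₀
  obtain ⟨ℓ, hℓA, hℓn⟩ := Nat.find_spec hP
  rw [← hn₀] at hℓn
  -- n₀ ≠ 0
  have hne : n₀ ≠ 0 := by
    intro h
    rw [h] at hℓn
    have : ℓ ∈ A ∩ B := Finset.mem_inter.mpr ⟨hℓA, hℓn⟩
    simp [hdisj] at this
  obtain ⟨m, hm⟩ : ∃ m, n₀ = m + 1 := ⟨n₀ - 1, (Nat.succ_pred_eq_of_ne_zero hne).symm⟩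
  have hmin : ∀ x ∈ A, x ∉ iterAdopt w θ B m := by
    intro x hx hxm
    exact Nat.find_min hP (by omega : m < n₀) ⟨x, hx, hxm⟩
  have hsub : iterAdopt w θ B m ⊆ B := by
    intro x hx
    have hxu : x ∈ A ∪ B := by rw [hcover]; exact Finset.mem_univ x
    rcases Finset.mem_union.mp hxu with h | h
    · exact absurd hx (hmin x h)
    · exact h
  rw [hm] at hℓn
  rw [iterAdopt, Finset.mem_union] at hℓn
  rcases hℓn with h | h
  · exact absurd h (hmin ℓ hℓA)
  · rw [Finset.mem_filter] at h
    have hpress : θ ℓ ≤ pressure w (C ℓ) ℓ := by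
      refine h.2.trans (le_trans ?_ (hC ℓ hℓA))
      exact Finset.sum_le_sum_of_subset_of_nonneg hsub (fun i _ _ => hw i ℓ)
    refine ⟨ℓ, hℓA, ?_⟩
    rw [starAdopt, Finset.mem_filter]
    refine ⟨Finset.mem_univ ℓ, 1, ?_⟩
    rw [iterAdopt, Finset.mem_union, Finset.mem_filter]
    exact Or.inr ⟨Finset.mem_univ ℓ, hpress⟩
end

section
/- In the Lighthouse argument, the lighthouse agent adopts in one step: if A ⊔ B partitions 𝒜, a₀ ∈ A, and a₀ ∈ B*, then there exists ℓ ∈ A with ‖B‖_ℓ ≥ θ(ℓ) (i.e., ℓ ∈ B^1 \ B). -/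
open Classical Finset

theorem stmt10 {𝒜 : Type*} [Fintype 𝒜] (w : 𝒜 → 𝒜 → ℝ) (θ : 𝒜 → ℝ)
    (hw : ∀ a b, 0 ≤ w a b) (hθ : ∀ a, 0 ≤ θ a) (A B : Finset 𝒜)
    (hcover : A ∪ B = Finset.univ) (hdisj : A ∩ B = ∅)
    (a₀ : 𝒜) (ha₀ : a₀ ∈ A) (hstar : a₀ ∈ starAdopt w θ B) :
    ∃ ℓ ∈ A, θ ℓ ≤ pressure w B ℓ := by
  simp only [starAdopt, Finset.mem_filter] at hstar
  obtain ⟨-, k₀, hk₀⟩ := hstar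
  have hP : ∃ k, ∃ x ∈ A, x ∈ iterAdopt w θ B k := ⟨k₀, a₀, ha₀, hk₀⟩
  classical
  set k := Nat.find hP with hkdef
  obtain ⟨ℓ, hℓA, hℓk⟩ := Nat.find_spec hP
  have hk0 : k ≠ 0 := by
    intro h
    have := hℓk
    rw [← hkdef, h] at this
    have : ℓ ∈ A ∩ B := Finset.mem_inter.2 ⟨hℓA, this⟩
    rw [hdisj] at this
    exact Finset.notMem_empty ℓ this
  obtain ⟨m, hm⟩ : ∃ m, k = m + 1 := ⟨k - 1, (Nat.succ_pred_eq_of_ne_zero hk0).symm⟩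
  have hmin : ∀ x ∈ A, x ∉ iterAdopt w θ B m := by
    intro x hx hxm
    exact Nat.find_min hP (by omega : m < k) ⟨x, hx, hxm⟩
  have hsub : iterAdopt w θ B m ⊆ B := by
    intro x hx
    have hxu : x ∈ A ∪ B := by rw [hcover]; exact Finset.mem_univ x
    rcases Finset.mem_union.1 hxu with h | h
    · exact absurd hx (hmin x h)
    · exact h
  rw [← hkdef, hm] at hℓk
  simp only [iterAdopt, Finset.mem_union, Finset.mem_filter] at hℓk
  rcases hℓk with h | ⟨-, h⟩
  · exact absurd h (hmin ℓ hℓA)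
  · refine ⟨ℓ, hℓA, h.trans ?_⟩
    exact Finset.sum_le_sum_of_subset_of_nonneg hsub (fun i _ _ => hw i ℓ)
end

section
/- Semantic version of Proposition 3: for agents {p, q, r} with weights w(q,p)=1, w(r,p)=2, w(q,r)=3, w(p,r)=4, all other weights 0, and for every threshold function θ : {p,q,r} → ℝ≥0: if p ∈ {q}* or r ∈ {q}*, then r ∈ {p}* or p ∈ {r}*. -/
open Classical Finset

theorem stmt18 (θ : Fin 3 → ℝ) (hθ : ∀ a, 0 ≤ θ a)
    (h : (0 : Fin 3) ∈ starAdopt ![![0, 0, 4], ![1, 0, 3], ![2, 0, 0]] θ {1} ∨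
         (2 : Fin 3) ∈ starAdopt ![![0, 0, 4], ![1, 0, 3], ![2, 0, 0]] θ {1}) :
    (2 : Fin 3) ∈ starAdopt ![![0, 0, 4], ![1, 0, 3], ![2, 0, 0]] θ {0} ∨
    (0 : Fin 3) ∈ starAdopt ![![0, 0, 4], ![1, 0, 3], ![2, 0, 0]] θ {2} := by
  classical
  set w : Fin 3 → Fin 3 → ℝ := ![![0, 0, 4], ![1, 0, 3], ![2, 0, 0]] with hw
  by_cases h2 : θ 2 ≤ 3
  · left
    simp only [starAdopt, Finset.mem_filter, Finset.mem_univ, true_and]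
    refine ⟨1, ?_⟩
    simp only [iterAdopt, Finset.mem_union, Finset.mem_filter, Finset.mem_univ, true_and]
    right
    have : pressure w {0} 2 = 4 := by
      simp [pressure, hw]
    exact Finset.mem_filter.mpr ⟨Finset.mem_univ _, by linarith⟩
  · by_cases h0 : θ 0 ≤ 1
    · right
      simp only [starAdopt, Finset.mem_filter, Finset.mem_univ, true_and]
      refine ⟨1, ?_⟩
      simp only [iterAdopt, Finset.mem_union, Finset.mem_filter, Finset.mem_univ, true_and]
      right
      have : pressure w {2} 0 = 2 := by
        simp [pressure, hw]
      exact Finset.mem_filter.mpr ⟨Finset.mem_univ _, by linarith⟩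
    · exfalso
      push_neg at h0 h2
      have key : ∀ k, iterAdopt w θ {1} k = {1} := by
        intro k
        induction k with
        | zero => rfl
        | succ n ih =>
          ext x
          simp only [iterAdopt, ih, Finset.mem_union, Finset.mem_filter,
            Finset.mem_univ, true_and]
          constructor
          · rintro (hx | hx)
            · exact hx
            · have hp : pressure w {1} x = w 1 x := by simp [pressure]
              rw [hp] at hx
              fin_cases x
              · exfalso; simp [hw] at hx; linarith
              · exact Finset.mem_singleton_self _
              · exfalso; simp [hw] at hx; linarith
          · exact Or.inl
      rcases h with h | h <;>
      · simp only [starAdopt, Finset.mem_filter, Finset.mem_univ, true_and] at h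
        obtain ⟨k, hk⟩ := h
        rw [key k] at hk
        simp at hk
end
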